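/- Let X = A_1 × ⋯ × A_m be a Cartesian set over F_q with 0 ∈ A_i for all 1 ≤ i ≤ m, let 1 ≤ d ≤ m, let 1 ≤ r ≤ C(m,d), and let M = {α_1,…,α_r} ⊆ S_d(m) be a set of r distinct exponent vectors. Then the number of points P ∈ X at which all the monomials x^{α_1},…,x^{α_r} vanish equals |Δ_X(M)|; that is, |{P ∈ X : x^{α_i}(P) = 0 for all 1 ≤ i ≤ r}| = |{β ∈ B_X : no α ∈ M satisfies α_i ≤ β_i for all i}|. -/
import Mathlib


/-- Square-free exponent vectors of total degree `d` in `m` variables. -/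
def Sd (m d : ℕ) : Set (Fin m → ℕ) := {a | (∀ i, a i ≤ 1) ∧ ∑ i, a i = d}

/-- Square-free exponent vectors of total degree at most `d` in `m` variables. -/
def Sle (m d : ℕ) : Set (Fin m → ℕ) := {a | (∀ i, a i ≤ 1) ∧ ∑ i, a i ≤ d}

/-- Evaluation code over the Cartesian set `X = A 0 × ⋯ × A (m-1)`, spanned by the
evaluations of the monomials `x^a` for `a ∈ S`. -/
noncomputable def evalCodeX {F : Type*} [Field F] {m : ℕ} (A : Fin m → Finset F)
    (S : Set (Fin m → ℕ)) :
    Submodule F ({P : Fin m → F // ∀ i, P i ∈ A i} → F) :=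
  Submodule.span F ((fun (a : Fin m → ℕ) (P : {P : Fin m → F // ∀ i, P i ∈ A i}) =>
    ∏ i, P.1 i ^ a i) '' S)

open Classical in
/-- Support of a linear code. -/
noncomputable def codeSupp {F ι : Type*} [Field F] [Fintype ι]
    (C : Submodule F (ι → F)) : Finset ι :=
  Finset.univ.filter (fun i => ∃ c ∈ C, c i ≠ 0)

/-- The `r`-th generalized Hamming weight of a linear code: the minimum cardinality of the
support of an `r`-dimensional subcode. -/
noncomputable def GHW {F ι : Type*} [Field F] [Fintype ι]
    (C : Submodule F (ι → F)) (r : ℕ) : ℕ :=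
  sInf {k | ∃ C' : Submodule F (ι → F),
    C' ≤ C ∧ Module.finrank F C' = r ∧ (codeSupp C').card = k}

/-- The footprint box `B_X = {0,…,n_1−1} × ⋯ × {0,…,n_m−1}`. -/
noncomputable def BX {F : Type*} {m : ℕ} (A : Fin m → Finset F) : Finset (Fin m → ℕ) :=
  Fintype.piFinset (fun i => Finset.range (A i).card)

open Classical in
/-- The shadow `∇_X(N)`: elements of `B_X` divisible by some element of `N`. -/
noncomputable def nablaX {F : Type*} {m : ℕ} (A : Fin m → Finset F)
    (N : Set (Fin m → ℕ)) : Finset (Fin m → ℕ) :=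
  (BX A).filter (fun b => ∃ a ∈ N, ∀ i, a i ≤ b i)

open Classical in
/-- The footprint `Δ_X(N) = B_X ∖ ∇_X(N)`. -/
noncomputable def deltaX {F : Type*} {m : ℕ} (A : Fin m → Finset F)
    (N : Set (Fin m → ℕ)) : Finset (Fin m → ℕ) :=
  (BX A).filter (fun b => ¬ ∃ a ∈ N, ∀ i, a i ≤ b i)

/-- Let `X = A_1 × ⋯ × A_m` be a Cartesian set over `F_q` with `0 ∈ A_i`
for all `i`, `1 ≤ d ≤ m`, `1 ≤ r ≤ C(m,d)`, and let `M ⊆ S_d(m)` with `|M| = r`. Then the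
number of points of `X` at which all the monomials `x^a`, `a ∈ M`, vanish equals
`|Δ_X(M)|`. -/
theorem card_common_zeros_eq_card_deltaX
    {F : Type*} [Field F] [Fintype F] [DecidableEq F] {m d r : ℕ}
    (A : Fin m → Finset F)
    (hcard : ∀ i, 2 ≤ (A i).card)
    (hmono : ∀ i j : Fin m, i ≤ j → (A i).card ≤ (A j).card)
    (h0 : ∀ i, (0 : F) ∈ A i)
    (hd1 : 1 ≤ d) (hdm : d ≤ m) (hr1 : 1 ≤ r) (hr2 : r ≤ m.choose d)
    (M : Finset (Fin m → ℕ)) (hM : ↑M ⊆ Sd m d) (hMcard : M.card = r) :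
    (Finset.univ.filter (fun P : {P : Fin m → F // ∀ i, P i ∈ A i} =>
        ∀ a ∈ M, ∏ j, P.1 j ^ a j = 0)).card = (deltaX A ↑M).card := by
  classical
  have hpos : ∀ i, 0 < (A i).card := fun i => Finset.card_pos.2 ⟨0, h0 i⟩
  set e : ∀ i, {x // x ∈ A i} ≃ Fin (A i).card := fun i =>
    (A i).equivFin.trans (Equiv.swap ((A i).equivFin ⟨0, h0 i⟩) ⟨0, hpos i⟩) with he
  have he0 : ∀ i, e i ⟨0, h0 i⟩ = ⟨0, hpos i⟩ := fun i => by
    simp [he, Equiv.swap_apply_left]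
  have hzero : ∀ i (x : {x // x ∈ A i}), ((e i x : Fin _) : ℕ) = 0 ↔ (x : F) = 0 := by
    intro i x
    constructor
    · intro h
      have h1 : e i x = ⟨0, hpos i⟩ := Fin.ext h
      have := (e i).injective (h1.trans (he0 i).symm)
      exact congrArg Subtype.val this
    · intro h
      have hx : x = ⟨0, h0 i⟩ := Subtype.ext h
      rw [hx, he0 i]
  have hmemdelta : ∀ b : Fin m → ℕ, b ∈ deltaX A (↑M : Set (Fin m → ℕ)) ↔
      (∀ i, b i < (A i).card) ∧ ¬ ∃ a ∈ M, ∀ i, a i ≤ b i := by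
    intro b
    simp [deltaX, BX, Fintype.mem_piFinset]
  have hcond : ∀ (P : {P : Fin m → F // ∀ i, P i ∈ A i}),
      (∀ a ∈ M, ∏ j, P.1 j ^ a j = 0) ↔
      ¬ ∃ a ∈ M, ∀ i, a i ≤ ((e i ⟨P.1 i, P.2 i⟩ : Fin _) : ℕ) := by
    intro P
    rw [not_exists]
    constructor
    · intro h a
      rintro ⟨haM, hle⟩
      have := h a haM
      rw [Finset.prod_eq_zero_iff] at this
      obtain ⟨j, _, hj⟩ := this
      have haj : a j ≠ 0 := by
        intro h0'
        rw [h0', pow_zero] at hj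
        exact one_ne_zero hj
      have hPj : P.1 j = 0 := pow_eq_zero_iff haj |>.1 hj
      have hz : ((e j ⟨P.1 j, P.2 j⟩ : Fin _) : ℕ) = 0 := (hzero j _).2 hPj
      have hle' := hle j
      rw [hz] at hle'
      omega
    · intro h a haM
      have := h a
      rw [not_and] at this
      have hne := this haM
      push_neg at hne
      obtain ⟨j, hj⟩ := hne
      have haj1 : a j ≤ 1 := (hM haM).1 j
      have hb0 : ((e j ⟨P.1 j, P.2 j⟩ : Fin _) : ℕ) = 0 := by omega
      have haj : a j ≠ 0 := by omega
      have hPj : P.1 j = 0 := (hzero j _).1 hb0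
      apply Finset.prod_eq_zero (Finset.mem_univ j)
      rw [hPj]
      exact zero_pow haj
  apply Finset.card_bij' (fun P _ => fun i => ((e i ⟨P.1 i, P.2 i⟩ : Fin _) : ℕ))
    (fun b hb => ⟨fun i => ((e i).symm ⟨b i,
        ((hmemdelta b).1 hb).1 i⟩ : {x // x ∈ A i}), fun i => Subtype.prop _⟩)
  · intro P hP
    ext i
    simp
  · intro b hb
    funext i
    simp
  · intro P hP
    rw [Finset.mem_filter] at hP
    rw [hmemdelta]
    refine ⟨fun i => Fin.is_lt _, (hcond P).1 hP.2⟩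
  · intro b hb
    rw [Finset.mem_filter]
    refine ⟨Finset.mem_univ _, ?_⟩
    rw [hcond]
    have hb2 := ((hmemdelta b).1 hb).2
    intro hex
    apply hb2
    obtain ⟨a, haM, hle⟩ := hex
    refine ⟨a, haM, fun i => ?_⟩
    have := hle i
    simpa using this
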